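/- arXiv:1705.05564 — 2 statements merged into one kernel-verified Lean document; each statement's English description precedes it below -/
import Mathlib

section
/- Let A = {a,b,c} and let θ be the antimorphism generated by the permutation σ with σ(a) = b, σ(b) = c, σ(c) = a. Then X = {ab, cb, ca, ba, bc, ac} is a θ-invariant code, X is not complete (a³ ∉ F(X*)), and with z = b⁴a³ba⁴, the set X ∪ {θⁱ(z) : i ∈ ℤ} = X ∪ {b⁴cb³c⁴, a⁴c³ac⁴, a⁴ba³b⁴, c⁴b³cb⁴, c⁴ac³a⁴, b⁴a³ba⁴} is again a θ-invariant code (indeed a prefix code union that remains prefix). -/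
open List

variable {α : Type*}

/-- The submonoid (as a set) generated by `X`: all concatenations of words of `X`. -/
def StarSet (X : Set (List α)) : Set (List α) :=
  {w | ∃ l : List (List α), (∀ u ∈ l, u ∈ X) ∧ l.flatten = w}

/-- `X` is a (variable-length) code: unique factorization over `X`. -/
def IsCode (X : Set (List α)) : Prop :=
  ∀ l m : List (List α), (∀ u ∈ l, u ∈ X) → (∀ u ∈ m, u ∈ X) →
    l.flatten = m.flatten → l = m

def Factor (u w : List α) : Prop := ∃ p s, p ++ u ++ s = w

def Factors (S : Set (List α)) : Set (List α) := {u | ∃ w ∈ S, Factor u w}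

def Complete (X : Set (List α)) : Prop := Factors (StarSet X) = Set.univ

def Thin (X : Set (List α)) : Prop := Factors X ≠ Set.univ

def Invariant (θ : List α → List α) (X : Set (List α)) : Prop := θ '' X = X

def IsSubmonoidSet (M : Set (List α)) : Prop :=
  [] ∈ M ∧ ∀ u ∈ M, ∀ v ∈ M, u ++ v ∈ M

/-- Stability (equidivisibility) condition, characterizing free submonoids of `A*`. -/
def Stable (M : Set (List α)) : Prop :=
  ∀ u v w, u ∈ M → u ++ v ∈ M → w ∈ M → v ++ w ∈ M → v ∈ M

def FreeSubmonoid (M : Set (List α)) : Prop := IsSubmonoidSet M ∧ Stable M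

/-- Minimal generating set of a submonoid: `(M \ {ε}) \ (M \ {ε})²`. -/
def MinGen (M : Set (List α)) : Set (List α) :=
  {w | w ∈ M ∧ w ≠ [] ∧
    ¬ ∃ u v, u ∈ M ∧ v ∈ M ∧ u ≠ [] ∧ v ≠ [] ∧ u ++ v = w}

def IsMorphism (θ : List α → List α) : Prop :=
  ∀ u v, θ (u ++ v) = θ u ++ θ v

def IsAntimorphism (θ : List α → List α) : Prop :=
  θ [] = [] ∧ ∀ u v, θ (u ++ v) = θ v ++ θ u

/-- `θ` is literal: the image of a letter is a letter. -/
def Literal (θ : List α → List α) : Prop := ∀ a : α, ∃ b : α, θ [a] = [b]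

/-- `θ` is a bijective literal (anti)morphism of the free monoid. -/
def LitAnti (θ : List α → List α) : Prop :=
  Function.Bijective θ ∧ Literal θ ∧ (IsMorphism θ ∨ IsAntimorphism θ)

/-- The set `{θ^i z : i ∈ ℤ}` for a bijective `θ` (negative powers are
captured by `θ^[i] w = z`). -/
def OrbitZ (θ : List α → List α) (z : List α) : Set (List α) :=
  {w | ∃ i : ℕ, θ^[i] z = w ∨ θ^[i] w = z}

def IsPrefixCode (X : Set (List α)) : Prop :=
  [] ∉ X ∧ ∀ x ∈ X, ∀ u, x ++ u ∈ X → u = []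

def IsSuffixCode (X : Set (List α)) : Prop :=
  [] ∉ X ∧ ∀ x ∈ X, ∀ u, u ++ x ∈ X → u = []

/-- `X^k`: products of exactly `k` words of `X`. -/
def PowSet (X : Set (List α)) (k : ℕ) : Set (List α) :=
  {w | ∃ l : List (List α), l.length = k ∧ (∀ u ∈ l, u ∈ X) ∧ l.flatten = w}

/-- Circular code: `x₁⋯xₘ = s·y₂⋯yₙ·p` with `y₁ = ps ∈ X`, `s ≠ ε`
forces `m = n`, `p = ε` and `xᵢ = yᵢ`. -/
def IsCircularCode (X : Set (List α)) : Prop :=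
  ∀ (l ys : List (List α)) (p s : List α),
    (∀ u ∈ l, u ∈ X) → p ++ s ∈ X → (∀ u ∈ ys, u ∈ X) → s ≠ [] →
    l.flatten = s ++ ys.flatten ++ p → l = (p ++ s) :: ys ∧ p = []

/-- A word is overlapping-free if no proper nonempty prefix equals a suffix. -/
def OverlapFree (w : List α) : Prop :=
  ¬ ∃ u v : List α, u ≠ [] ∧ u.length ≤ w.length - 1 ∧ u ++ w = w ++ v

/-- `X` is a regular (rational) language: accepted by a finite automaton. -/
def IsRegularSet (X : Set (List α)) : Prop :=
  ∃ (σ : Type) (_ : Fintype σ) (M : DFA α σ), M.accepts = X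


section AuxStmt16

lemma prefixCode_isCode {X : Set (List α)} (h : IsPrefixCode X) : IsCode X := by
  obtain ⟨hne, hpre⟩ := h
  intro l
  induction l with
  | nil =>
    intro m _ hm hj
    cases m with
    | nil => rfl
    | cons v m' =>
      exfalso
      simp only [flatten_nil, flatten_cons] at hj
      rcases List.append_eq_nil_iff.mp hj.symm with ⟨h1, _⟩
      exact hne (h1 ▸ hm v (mem_cons_self))
  | cons u l' ih =>
    intro m hl hm hj
    cases m with
    | nil =>
      exfalso
      simp only [flatten_cons, flatten_nil] at hj
      rcases List.append_eq_nil_iff.mp hj with ⟨h1, _⟩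
      exact hne (h1 ▸ hl u (mem_cons_self))
    | cons v m' =>
      simp only [flatten_cons] at hj
      have huv : u = v := by
        rcases List.prefix_or_prefix_of_prefix (hj ▸ prefix_append u l'.flatten)
          (prefix_append v m'.flatten) with ⟨r, hr⟩ | ⟨r, hr⟩
        · have : r = [] := hpre u (hl u (mem_cons_self)) r
            (hr ▸ hm v (mem_cons_self))
          simpa [this] using hr
        · have : r = [] := hpre v (hm v (mem_cons_self)) r
            (hr ▸ hl u (mem_cons_self))
          simp [this] at hr
          exact hr.symm
      subst huv
      have hjj : l'.flatten = m'.flatten := by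
        have := hj
        rwa [List.append_cancel_left_eq] at this
      rw [ih m' (fun x hx => hl x (mem_cons_of_mem _ hx))
        (fun x hx => hm x (mem_cons_of_mem _ hx)) hjj]

end AuxStmt16

/-- The antimorphism of `{a,b,c} = Fin 3` generated by the permutation
`σ(a) = b, σ(b) = c, σ(c) = a` (i.e. `x ↦ x + 1` on `Fin 3`). -/
def theta16 (w : List (Fin 3)) : List (Fin 3) := (w.map (· + 1)).reverse

/-- `X = {ab, cb, ca, ba, bc, ac}` with `a = 0, b = 1, c = 2`. -/
def X16 : Set (List (Fin 3)) :=
  {[0, 1], [2, 1], [2, 0], [1, 0], [1, 2], [0, 2]}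

/-- `z = b⁴a³ba⁴`. -/
def z16 : List (Fin 3) := [1, 1, 1, 1, 0, 0, 0, 1, 0, 0, 0, 0]


lemma X16_shape {u : List (Fin 3)} (h : u ∈ X16) : ∃ x y, x ≠ y ∧ u = [x, y] := by
  rcases h with h | h | h | h | h | h <;> subst h
  · exact ⟨0, 1, by decide, rfl⟩
  · exact ⟨2, 1, by decide, rfl⟩
  · exact ⟨2, 0, by decide, rfl⟩
  · exact ⟨1, 0, by decide, rfl⟩
  · exact ⟨1, 2, by decide, rfl⟩
  · exact ⟨0, 2, by decide, rfl⟩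

lemma pairs_neq : ∀ (l : List (List (Fin 3))), (∀ u ∈ l, u ∈ X16) →
    ∀ p (a b : Fin 3) s, Even p.length → p ++ a :: b :: s = l.flatten → a ≠ b := by
  intro l
  induction l with
  | nil =>
    intro _ p a b s _ hj
    simp at hj
  | cons u l' ih =>
    intro hl p a b s hp hj
    obtain ⟨x, y, hxy, rfl⟩ := X16_shape (hl u (mem_cons_self))
    match p with
    | [] =>
      simp only [nil_append, flatten_cons, cons_append] at hj
      obtain ⟨rfl, rfl, -⟩ : a = x ∧ b = y ∧ s = l'.flatten := by
        injection hj with h1 h2; injection h2 with h3 h4; exact ⟨h1, h3, h4⟩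
      exact hxy
    | [c] => simp at hp
    | c :: d :: p' =>
      simp only [flatten_cons, cons_append] at hj
      injection hj with h1 h2; injection h2 with h3 h4
      refine ih (fun v hv => hl v (mem_cons_of_mem _ hv)) p' a b s ?_ h4
      simpa [Nat.even_add_one, parity_simps] using hp

lemma theta2 (w : List (Fin 3)) : theta16 (theta16 w) = w.map (· + 1 + 1) := by
  simp only [theta16, List.map_reverse, List.reverse_reverse, List.map_map]
  rfl

lemma theta6 (w : List (Fin 3)) : theta16^[6] w = w := by
  have key : ∀ v : List (Fin 3), ((v.map (· + 1 + 1)).map (· + 1 + 1)).map (· + 1 + 1) = v := by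
    intro v
    induction v with
    | nil => rfl
    | cons a t iht =>
      simp only [List.map_cons]
      rw [iht]
      have h6 : ∀ x : Fin 3, x + 1 + 1 + 1 + 1 + 1 + 1 = x := by decide
      rw [h6]
  show theta16 (theta16 (theta16 (theta16 (theta16 (theta16 w))))) = w
  rw [theta2 w, theta2, theta2]
  exact key w

lemma theta_mod (w : List (Fin 3)) : ∀ i, theta16^[i] w = theta16^[i % 6] w := by
  intro i
  induction i using Nat.strong_induction_on with
  | _ i ih =>
    by_cases h : i < 6
    · rw [Nat.mod_eq_of_lt h]
    · push_neg at h
      have h1 : i = (i - 6) + 6 := by omega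
      rw [h1, Function.iterate_add_apply, theta6, ih (i - 6) (by omega)]
      have h2 : (i - 6) % 6 = (i - 6 + 6) % 6 := by omega
      rw [h2]

/-- The six-element orbit set. -/
def S16 : Set (List (Fin 3)) :=
  {[1,1,1,1,2,1,1,1,2,2,2,2], [0,0,0,0,2,2,2,0,2,2,2,2],
   [0,0,0,0,1,0,0,0,1,1,1,1], [2,2,2,2,1,1,1,2,1,1,1,1],
   [2,2,2,2,0,2,2,2,0,0,0,0], [1,1,1,1,0,0,0,1,0,0,0,0]}

lemma mem_S16 : ∀ i : ℕ, theta16^[i] z16 ∈ S16 := by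
  intro i
  rw [theta_mod]
  have h : i % 6 = 0 ∨ i % 6 = 1 ∨ i % 6 = 2 ∨ i % 6 = 3 ∨ i % 6 = 4 ∨ i % 6 = 5 := by omega
  rcases h with h | h | h | h | h | h <;> rw [h] <;>
    simp only [S16, Set.mem_insert_iff, Set.mem_singleton_iff] <;> decide

lemma orbit_eq : OrbitZ theta16 z16 = S16 := by
  apply Set.Subset.antisymm
  · rintro w ⟨i, hw | hw⟩
    · exact hw ▸ mem_S16 i
    · have h1 : theta16^[5 * i] (theta16^[i] w) = w := by
        rw [← Function.iterate_add_apply, show 5 * i + i = 6 * i from by ring, theta_mod,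
          Nat.mul_mod_right, Function.iterate_zero_apply]
      rw [hw] at h1
      exact h1 ▸ mem_S16 (5 * i)
  · intro w hw
    rcases hw with rfl | rfl | rfl | rfl | rfl | rfl
    · exact ⟨1, Or.inl (by decide)⟩
    · exact ⟨2, Or.inl (by decide)⟩
    · exact ⟨3, Or.inl (by decide)⟩
    · exact ⟨4, Or.inl (by decide)⟩
    · exact ⟨5, Or.inl (by decide)⟩
    · exact ⟨0, Or.inl (by decide)⟩

lemma invariant_X16 : Invariant theta16 X16 := by
  apply Set.Subset.antisymm
  · rintro w ⟨u, hu, rfl⟩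
    rcases hu with rfl | rfl | rfl | rfl | rfl | rfl <;>
      simp only [X16, Set.mem_insert_iff, Set.mem_singleton_iff] <;> decide
  · intro w hw
    rcases hw with rfl | rfl | rfl | rfl | rfl | rfl
    · exact ⟨[0, 2], Or.inr (Or.inr (Or.inr (Or.inr (Or.inr rfl)))), by decide⟩
    · exact ⟨[0, 1], Or.inl rfl, by decide⟩
    · exact ⟨[2, 1], Or.inr (Or.inl rfl), by decide⟩
    · exact ⟨[2, 0], Or.inr (Or.inr (Or.inl rfl)), by decide⟩
    · exact ⟨[1, 0], Or.inr (Or.inr (Or.inr (Or.inl rfl))), by decide⟩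
    · exact ⟨[1, 2], Or.inr (Or.inr (Or.inr (Or.inr (Or.inl rfl)))), by decide⟩

lemma image_S16 : theta16 '' S16 = S16 := by
  apply Set.Subset.antisymm
  · rintro w ⟨u, hu, rfl⟩
    rcases hu with rfl | rfl | rfl | rfl | rfl | rfl <;>
      simp only [S16, Set.mem_insert_iff, Set.mem_singleton_iff] <;> decide
  · intro w hw
    rcases hw with rfl | rfl | rfl | rfl | rfl | rfl
    · exact ⟨[1,1,1,1,0,0,0,1,0,0,0,0], Or.inr (Or.inr (Or.inr (Or.inr (Or.inr rfl)))), by decide⟩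
    · exact ⟨[1,1,1,1,2,1,1,1,2,2,2,2], Or.inl rfl, by decide⟩
    · exact ⟨[0,0,0,0,2,2,2,0,2,2,2,2], Or.inr (Or.inl rfl), by decide⟩
    · exact ⟨[0,0,0,0,1,0,0,0,1,1,1,1], Or.inr (Or.inr (Or.inl rfl)), by decide⟩
    · exact ⟨[2,2,2,2,1,1,1,2,1,1,1,1], Or.inr (Or.inr (Or.inr (Or.inl rfl))), by decide⟩
    · exact ⟨[2,2,2,2,0,2,2,2,0,0,0,0], Or.inr (Or.inr (Or.inr (Or.inr (Or.inl rfl)))), by decide⟩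

lemma prefix_union : IsPrefixCode (X16 ∪ S16) := by
  constructor
  · rintro (h | h) <;> rcases h with h | h | h | h | h | h <;> simp at h
  · intro x hx u hxu
    rcases hx with (rfl | rfl | rfl | rfl | rfl | rfl) | (rfl | rfl | rfl | rfl | rfl | rfl) <;>
      rcases hxu with (h | h | h | h | h | h) | (h | h | h | h | h | h) <;>
      simp_all

theorem stmt16 :
    Invariant theta16 X16 ∧ IsCode X16 ∧
    ([0, 0, 0] : List (Fin 3)) ∉ Factors (StarSet X16) ∧
    OrbitZ theta16 z16 =
      {[1,1,1,1,2,1,1,1,2,2,2,2], [0,0,0,0,2,2,2,0,2,2,2,2],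
       [0,0,0,0,1,0,0,0,1,1,1,1], [2,2,2,2,1,1,1,2,1,1,1,1],
       [2,2,2,2,0,2,2,2,0,0,0,0], [1,1,1,1,0,0,0,1,0,0,0,0]} ∧
    Invariant theta16 (X16 ∪ OrbitZ theta16 z16) ∧
    IsCode (X16 ∪ OrbitZ theta16 z16) := by
  have horb := orbit_eq
  refine ⟨invariant_X16, prefixCode_isCode ⟨by rintro (h | h | h | h | h | h) <;> simp at h,
    fun x hx u hxu => by
      rcases hx with rfl | rfl | rfl | rfl | rfl | rfl <;>
        rcases hxu with h | h | h | h | h | h <;> simp_all⟩, ?_, horb, ?_, ?_⟩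
  · rintro ⟨w, ⟨l, hl, rfl⟩, p, s, hps⟩
    rcases Nat.even_or_odd p.length with he | ho
    · exact pairs_neq l hl p 0 0 (0 :: s) he (by simpa [List.append_assoc] using hps) rfl
    · refine pairs_neq l hl (p ++ [0]) 0 0 s ?_ ?_ rfl
      · simpa [Nat.even_add_one, parity_simps] using ho
      · rw [List.append_assoc] at hps ⊢
        simpa using hps
  · rw [horb]
    show theta16 '' (X16 ∪ S16) = X16 ∪ S16
    rw [Set.image_union, invariant_X16, image_S16]
  · rw [horb]
    exact prefixCode_isCode prefix_union
end

section
/- Let Y ⊆ A⁺ be a code, y ∈ Y, and define Y₀ = (Y \ {y})·{y}*. Then Y₀ is a code, and Y₀* ⊊ Y* (the containment is strict since y ∈ Y* \ Y₀*). Moreover, if θ is a bijective literal (anti)morphism and Yᵢ = θⁱ(Y₀) for i ∈ ℤ, then each Yᵢ is a code and M = ⋂_{i∈ℤ} Yᵢ* is a free submonoid satisfying θ(M) = M. -/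
open List

variable {α : Type*}

section Helpers
variable {α : Type*}

/-- bijective (anti)morphism -/
def GoodMap (φ : List α → List α) : Prop :=
  Function.Bijective φ ∧ (IsMorphism φ ∨ IsAntimorphism φ)

lemma morph_nil {φ : List α → List α} (h : IsMorphism φ) : φ [] = [] := by
  have := h [] []
  simp only [List.append_nil] at this
  have := congrArg List.length this
  simp at this
  exact this

lemma morph_join {φ : List α → List α} (h : IsMorphism φ) :
    ∀ l : List (List α), φ l.flatten = (l.map φ).flatten := by
  intro l; induction l with
  | nil => simpa using morph_nil h
  | cons a t ih => simp [h a t.flatten, ih]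

lemma anti_join {φ : List α → List α} (h : IsAntimorphism φ) :
    ∀ l : List (List α), φ l.flatten = ((l.map φ).reverse).flatten := by
  intro l; induction l with
  | nil => simpa using h.1
  | cons a t ih => simp [h.2 a t.flatten, ih]

lemma goodmap_comp {φ ψ : List α → List α} (h : GoodMap φ) (h' : GoodMap ψ) :
    GoodMap (φ ∘ ψ) := by
  refine ⟨h.1.comp h'.1, ?_⟩
  have hnilψ : ψ [] = [] := h'.2.elim morph_nil (fun h => h.1)
  have hnilφ : φ [] = [] := h.2.elim morph_nil (fun h => h.1)
  rcases h.2 with hm | ha <;> rcases h'.2 with hm' | ha'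
  · exact Or.inl fun u v => by
      simp only [Function.comp_apply, hm' u v, hm (ψ u) (ψ v)]
  · exact Or.inr ⟨by simp [Function.comp, hnilψ, hnilφ], fun u v => by
      simp only [Function.comp_apply, ha'.2 u v, hm (ψ v) (ψ u)]⟩
  · exact Or.inr ⟨by simp [Function.comp, hnilψ, hnilφ], fun u v => by
      simp only [Function.comp_apply, hm' u v, ha.2 (ψ u) (ψ v)]⟩
  · exact Or.inl fun u v => by
      simp only [Function.comp_apply, ha'.2 u v, ha.2 (ψ v) (ψ u)]

lemma goodmap_iterate {θ : List α → List α} (h : GoodMap θ) (i : ℕ) :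
    GoodMap (θ^[i]) := by
  induction i with
  | zero => exact ⟨Function.bijective_id, Or.inl fun u v => rfl⟩
  | succ n ih => rw [Function.iterate_succ']; exact goodmap_comp h ih

lemma goodmap_pullback {φ : List α → List α} (h : GoodMap φ) {X : Set (List α)}
    (l : List (List α)) (hl : ∀ u ∈ l, u ∈ φ '' X) :
    ∃ l₀ : List (List α), (∀ u ∈ l₀, u ∈ X) ∧ l₀.map φ = l := by
  induction l with
  | nil => exact ⟨[], by simp, rfl⟩
  | cons a t ih =>
    obtain ⟨t₀, ht₀, hmap⟩ := ih (fun u hu => hl u (by simp [hu]))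
    obtain ⟨x, hx, hxa⟩ := hl a (by simp)
    exact ⟨x :: t₀, by simpa [hx] using ht₀, by simp [hxa, hmap]⟩

lemma code_image {φ : List α → List α} (h : GoodMap φ) {X : Set (List α)}
    (hX : IsCode X) : IsCode (φ '' X) := by
  intro l m hl hm hj
  obtain ⟨l₀, hl₀, rfl⟩ := goodmap_pullback h l hl
  obtain ⟨m₀, hm₀, rfl⟩ := goodmap_pullback h m hm
  rcases h.2 with hm' | ha'
  · rw [← morph_join hm', ← morph_join hm'] at hj
    rw [hX l₀ m₀ hl₀ hm₀ (h.1.1 hj)]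
  · rw [show (l₀.map φ).flatten = φ l₀.reverse.flatten by
        rw [anti_join ha', List.map_reverse, List.reverse_reverse],
      show (m₀.map φ).flatten = φ m₀.reverse.flatten by
        rw [anti_join ha', List.map_reverse, List.reverse_reverse]] at hj
    have := hX l₀.reverse m₀.reverse (by simpa using hl₀) (by simpa using hm₀) (h.1.1 hj)
    rw [List.reverse_injective this]

lemma code_of_image {φ : List α → List α} (h : GoodMap φ) {X : Set (List α)}
    (hX : IsCode (φ '' X)) : IsCode X := by
  intro l m hl hm hj
  have hl' : ∀ u ∈ l.map φ, u ∈ φ '' X := by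
    intro u hu; obtain ⟨x, hx, rfl⟩ := List.mem_map.mp hu; exact ⟨x, hl x hx, rfl⟩
  have hm' : ∀ u ∈ m.map φ, u ∈ φ '' X := by
    intro u hu; obtain ⟨x, hx, rfl⟩ := List.mem_map.mp hu; exact ⟨x, hm x hx, rfl⟩
  rcases h.2 with hmo | ha
  · have := hX (l.map φ) (m.map φ) hl' hm'
      (by rw [← morph_join hmo, ← morph_join hmo, hj])
    exact List.map_injective_iff.mpr h.1.1 this
  · have := hX (l.map φ).reverse (m.map φ).reverse (by simpa using hl')
      (by simpa using hm') (by rw [← anti_join ha, ← anti_join ha, hj])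
    exact List.map_injective_iff.mpr h.1.1 (List.reverse_injective this)

lemma image_starset {φ : List α → List α} (h : GoodMap φ) (X : Set (List α)) :
    φ '' StarSet X = StarSet (φ '' X) := by
  ext x; constructor
  · rintro ⟨u, ⟨l, hl, rfl⟩, rfl⟩
    rcases h.2 with hmo | ha
    · exact ⟨l.map φ, fun v hv => by
        obtain ⟨z, hz, rfl⟩ := List.mem_map.mp hv; exact ⟨z, hl z hz, rfl⟩,
        (morph_join hmo l).symm⟩
    · refine ⟨(l.map φ).reverse, fun v hv => ?_, (anti_join ha l).symm⟩
      rw [List.mem_reverse] at hv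
      obtain ⟨z, hz, rfl⟩ := List.mem_map.mp hv; exact ⟨z, hl z hz, rfl⟩
  · rintro ⟨m, hm, rfl⟩
    obtain ⟨m₀, hm₀, rfl⟩ := goodmap_pullback h m hm
    rcases h.2 with hmo | ha
    · exact ⟨m₀.flatten, ⟨m₀, hm₀, rfl⟩, morph_join hmo m₀⟩
    · refine ⟨m₀.reverse.flatten, ⟨m₀.reverse, by simpa using hm₀, rfl⟩, ?_⟩
      rw [anti_join ha, List.map_reverse, List.reverse_reverse]

lemma stable_starset {X : Set (List α)} (hX : IsCode X) : Stable (StarSet X) := by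
  intro u v w hu huv hw hvw
  obtain ⟨l, hl, rfl⟩ := hu
  obtain ⟨m, hm, hm2⟩ := huv
  obtain ⟨n, hn, rfl⟩ := hw
  obtain ⟨p, hp, hp2⟩ := hvw
  have hj : (m ++ n).flatten = (l ++ p).flatten := by
    simp [hm2, hp2, List.append_assoc]
  have := hX (m ++ n) (l ++ p)
    (by intro x hx; rcases List.mem_append.mp hx with h' | h'; exacts [hm x h', hn x h'])
    (by intro x hx; rcases List.mem_append.mp hx with h' | h'; exacts [hl x h', hp x h'])
    hj
  rcases List.append_eq_append_iff.mp this with ⟨a, ha1, _⟩ | ⟨c, hc1, _⟩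
  · -- l = m ++ a : then l.flatten = l.flatten ++ v ++ a.flatten, so v = []
    have : l.flatten = (l.flatten ++ v) ++ a.flatten := by
      conv_lhs => rw [ha1]
      simp [hm2]
    have hlen := congrArg List.length this
    simp at hlen
    exact ⟨[], by simp, by simp [hlen.1]⟩
  · -- m = l ++ c : v = c.flatten
    have : l.flatten ++ v = l.flatten ++ c.flatten := by rw [← hm2, hc1]; simp
    have hv : v = c.flatten := by
      have := congrArg (List.drop l.flatten.length) this
      simpa using this
    exact ⟨c, fun x hx => hm x (by simp [hc1, hx]), hv.symm⟩

end Helpers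
section Helpers2
variable {α : Type*}

/-- embed a pair `(w,k)` as the word `w·yᵏ` -/
def embP (y : List α) (p : List α × ℕ) : List α := p.1 ++ (List.replicate p.2 y).flatten

/-- its canonical factorization over `Y` -/
def decP (y : List α) (L : List (List α × ℕ)) : List (List α) :=
  L.flatMap (fun p => p.1 :: List.replicate p.2 y)

lemma decP_join (y : List α) (L : List (List α × ℕ)) :
    (decP y L).flatten = (L.map (embP y)).flatten := by
  induction L with
  | nil => rfl
  | cons p L ih => simp [decP, embP, List.flatMap_cons] at *; simp [ih]

lemma decP_head (y : List α) (L : List (List α × ℕ)) (h : ∀ p ∈ L, p.1 ≠ y) :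
    (decP y L).head? ≠ some y := by
  cases L with
  | nil => simp [decP]
  | cons p L =>
    simp [decP, List.flatMap_cons]
    exact h p (by simp)

lemma rep_aux (y : List α) : ∀ (k k' : ℕ) (s t : List (List α)),
    s.head? ≠ some y → t.head? ≠ some y →
    List.replicate k y ++ s = List.replicate k' y ++ t → k = k' ∧ s = t := by
  intro k
  induction k with
  | zero =>
    intro k' s t hs ht heq
    cases k' with
    | zero => simpa using heq
    | succ n =>
      exfalso; apply hs
      simp only [List.replicate_zero, List.nil_append] at heq
      rw [heq]; simp [List.replicate_succ]
  | succ m ih =>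
    intro k' s t hs ht heq
    cases k' with
    | zero =>
      exfalso; apply ht
      simp only [List.replicate_zero, List.nil_append] at heq
      rw [← heq]; simp [List.replicate_succ]
    | succ n =>
      simp only [List.replicate_succ, List.cons_append, List.cons.injEq] at heq
      obtain ⟨h1, h2⟩ := ih n s t hs ht heq.2
      exact ⟨by omega, h2⟩

lemma decP_inj (y : List α) : ∀ (L L' : List (List α × ℕ)),
    (∀ p ∈ L, p.1 ≠ y) → (∀ p ∈ L', p.1 ≠ y) → decP y L = decP y L' → L = L' := by
  intro L
  induction L with
  | nil =>
    intro L' _ _ heq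
    cases L' with
    | nil => rfl
    | cons p L' => exfalso; simp [decP, List.flatMap_cons] at heq
  | cons p L ih =>
    intro L' hL hL' heq
    cases L' with
    | nil => exfalso; simp [decP, List.flatMap_cons] at heq
    | cons q L'' =>
      simp only [decP, List.flatMap_cons, List.cons_append, List.cons.injEq] at heq
      obtain ⟨h1, h2⟩ := heq
      have := rep_aux y p.2 q.2 (decP y L) (decP y L'')
        (decP_head y L (fun r hr => hL r (by simp [hr])))
        (decP_head y L'' (fun r hr => hL' r (by simp [hr]))) h2
      have hL2 : L = L'' := ih L'' (fun r hr => hL r (by simp [hr]))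
        (fun r hr => hL' r (by simp [hr])) this.2
      have : p = q := Prod.ext h1 this.1
      rw [this, hL2]

end Helpers2
theorem stmt17 (θ : List α → List α) (hθ : LitAnti θ)
    (Y : Set (List α)) (hYe : [] ∉ Y) (hcode : IsCode Y)
    (y : List α) (hy : y ∈ Y)
    (Y₀ : Set (List α))
    (hY₀ : Y₀ = {u | ∃ w ∈ Y \ {y}, ∃ k : ℕ, u = w ++ (List.replicate k y).flatten})
    (Fam : Set (Set (List α)))
    (hFam : Fam = {S | ∃ i : ℕ, θ^[i] '' Y₀ = S ∨ θ^[i] '' S = Y₀})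
    (M : Set (List α)) (hM : M = ⋂ S ∈ Fam, StarSet S) :
    IsCode Y₀ ∧ StarSet Y₀ ⊂ StarSet Y ∧ (∀ S ∈ Fam, IsCode S) ∧
      FreeSubmonoid M ∧ θ '' M = M := by
  have gθ : GoodMap θ := ⟨hθ.1, hθ.2.2⟩
  -- expansion of factorizations over Y₀
  have expand : ∀ l : List (List α), (∀ u ∈ l, u ∈ Y₀) →
      ∃ L : List (List α × ℕ), (∀ p ∈ L, p.1 ∈ Y ∧ p.1 ≠ y) ∧ L.map (embP y) = l := by
    intro l
    induction l with
    | nil => exact fun _ => ⟨[], by simp, rfl⟩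
    | cons a t ih =>
      intro hl
      obtain ⟨L, hL, hmap⟩ := ih (fun u hu => hl u (by simp [hu]))
      have ha := hl a (by simp)
      rw [hY₀] at ha
      obtain ⟨w, hw, k, hk⟩ := ha
      refine ⟨(w, k) :: L, ?_, by simp [embP, hmap, hk.symm]⟩
      intro p hp
      rcases List.mem_cons.mp hp with rfl | hp'
      · exact ⟨hw.1, hw.2⟩
      · exact hL p hp'
  have decP_memY : ∀ L : List (List α × ℕ), (∀ p ∈ L, p.1 ∈ Y) →
      ∀ u ∈ decP y L, u ∈ Y := by
    intro L hL u hu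
    rw [decP, List.mem_flatMap] at hu
    obtain ⟨p, hp, hu⟩ := hu
    rcases List.mem_cons.mp hu with rfl | h
    · exact hL p hp
    · rw [List.eq_of_mem_replicate h]; exact hy
  have codeY₀ : IsCode Y₀ := by
    intro l m hl hm hj
    obtain ⟨L, hL, rfl⟩ := expand l hl
    obtain ⟨L', hL', rfl⟩ := expand m hm
    have heq := hcode (decP y L) (decP y L')
      (decP_memY L fun p hp => (hL p hp).1)
      (decP_memY L' fun p hp => (hL' p hp).1)
      (by rw [decP_join, decP_join, hj])
    rw [decP_inj y L L' (fun p hp => (hL p hp).2) (fun p hp => (hL' p hp).2) heq]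
  have ynotin : y ∉ StarSet Y₀ := by
    rintro ⟨l, hl, hjoin⟩
    obtain ⟨L, hL, rfl⟩ := expand l hl
    have h1 : (decP y L).flatten = [y].flatten := by rw [decP_join, hjoin]; simp
    have heq := hcode (decP y L) [y]
      (decP_memY L fun p hp => (hL p hp).1) (by simpa using hy) h1
    cases L with
    | nil => simp [decP] at heq
    | cons p L' =>
      simp only [decP, List.flatMap_cons] at heq
      injection heq with h1 _
      exact (hL p (by simp)).2 h1
  have hsub : StarSet Y₀ ⊆ StarSet Y := by
    rintro x ⟨l, hl, rfl⟩
    obtain ⟨L, hL, rfl⟩ := expand l hl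
    exact ⟨decP y L, decP_memY L (fun p hp => (hL p hp).1), decP_join y L⟩
  have hssub : StarSet Y₀ ⊂ StarSet Y := by
    rw [Set.ssubset_def]
    refine ⟨hsub, fun hcon => ynotin (hcon ⟨[y], by simp [hy], by simp⟩)⟩
  have famcode : ∀ S ∈ Fam, IsCode S := by
    intro S hS
    rw [hFam] at hS
    obtain ⟨i, h | h⟩ := hS
    · rw [← h]; exact code_image (goodmap_iterate gθ i) codeY₀
    · exact code_of_image (goodmap_iterate gθ i) (h ▸ codeY₀)
  have hfree : FreeSubmonoid M := by
    constructor
    · constructor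
      · rw [hM]
        exact Set.mem_iInter₂.mpr fun S _ => ⟨[], by simp, rfl⟩
      · intro u hu v hv
        rw [hM, Set.mem_iInter₂] at hu hv ⊢
        intro S hS
        obtain ⟨l, hl, rfl⟩ := hu S hS
        obtain ⟨m, hm, rfl⟩ := hv S hS
        refine ⟨l ++ m, ?_, by simp⟩
        intro x hx
        rcases List.mem_append.mp hx with h' | h'
        exacts [hl x h', hm x h']
    · intro u v w hu huv hw hvw
      rw [hM, Set.mem_iInter₂] at hu huv hw hvw ⊢
      intro S hS
      exact stable_starset (famcode S hS) u v w (hu S hS) (huv S hS) (hw S hS) (hvw S hS)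
  have famθ : ∀ S ∈ Fam, θ '' S ∈ Fam := by
    intro S hS
    rw [hFam] at hS ⊢
    obtain ⟨i, h | h⟩ := hS
    · exact ⟨i + 1, Or.inl (by rw [Function.iterate_succ', Set.image_comp, h])⟩
    · cases i with
      | zero =>
        refine ⟨1, Or.inl ?_⟩
        simp only [Function.iterate_zero, Set.image_id] at h
        rw [h]
        simp [Function.iterate_one]
      | succ j =>
        refine ⟨j, Or.inr ?_⟩
        rw [Function.iterate_succ, Set.image_comp] at h
        exact h
  have famθinv : ∀ S ∈ Fam, ∃ T ∈ Fam, θ '' T = S := by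
    intro S hS
    rw [hFam] at hS ⊢
    obtain ⟨i, h | h⟩ := hS
    · cases i with
      | zero =>
        simp only [Function.iterate_zero, Set.image_id] at h
        refine ⟨θ ⁻¹' Y₀, ⟨1, Or.inr ?_⟩, ?_⟩
        · simp [Function.iterate_one, Set.image_preimage_eq _ hθ.1.2]
        · rw [Set.image_preimage_eq _ hθ.1.2, h]
      | succ j =>
        exact ⟨θ^[j] '' Y₀, ⟨j, Or.inl rfl⟩,
          by rw [← h, Function.iterate_succ', Set.image_comp]⟩
    · refine ⟨θ ⁻¹' S, ⟨i + 1, Or.inr ?_⟩, Set.image_preimage_eq _ hθ.1.2⟩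
      rw [Function.iterate_succ, Set.image_comp, Set.image_preimage_eq _ hθ.1.2]
      exact h
  have hinv : θ '' M = M := by
    apply Set.Subset.antisymm
    · rintro _ ⟨u, hu, rfl⟩
      rw [hM, Set.mem_iInter₂] at hu ⊢
      intro S hS
      obtain ⟨T, hT, rfl⟩ := famθinv S hS
      rw [← image_starset gθ T]
      exact ⟨u, hu T hT, rfl⟩
    · intro u hu
      rw [hM, Set.mem_iInter₂] at hu
      refine ⟨Function.invFun θ u, ?_, Function.rightInverse_invFun hθ.1.2 u⟩
      rw [hM, Set.mem_iInter₂]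
      intro S hS
      have h1 : u ∈ StarSet (θ '' S) := hu (θ '' S) (famθ S hS)
      rw [← image_starset gθ S] at h1
      obtain ⟨w, hw, hwu⟩ := h1
      have hwu' : Function.invFun θ u = w := by
        rw [← hwu, Function.leftInverse_invFun hθ.1.1 w]
      rw [hwu']; exact hw
  exact ⟨codeY₀, hssub, famcode, hfree, hinv⟩
end
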